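/- arXiv:1710.11402 — 3 statements merged into one kernel-verified Lean document; each statement's English description precedes it below -/
import Mathlib

section
/- Principle of one large jump for Boolean convolutions: let μ be a probability measure on [0,∞) with distribution function F satisfying 1 − F(y) > 0 for all y ≥ 0. Assume μ is Boolean-subexponential, i.e. for every integer n ≥ 1, every probability measure ρ_n on ℝ with K_{ρ_n}(z) = n·K_μ(z) for all z ∈ ℂ⁺ satisfies ρ_n(y,∞)/(n(1 − F(y))) → 1 as y → ∞. Then for every n ≥ 1 and every such ρ_n, ρ_n(y,∞)/(1 − F^{∨∪n}(y)) → 1 as y → ∞, where F^{∨∪n}(y) = F(y)/(n − (n−1)F(y)) is the n-fold Boolean max convolution power of F. -/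
open MeasureTheory Filter Set Complex

noncomputable section

/-- The Cauchy transform of a measure `τ` on `ℝ`: `G_τ(z) = ∫ 1/(z − t) dτ(t)`. -/
def cauchyG (τ : Measure ℝ) (z : ℂ) : ℂ := ∫ t, (z - (t : ℂ))⁻¹ ∂τ

/-- The K-transform `K_τ(z) = z − 1/G_τ(z)`. -/
def Ktrans (τ : Measure ℝ) (z : ℂ) : ℂ := z - (cauchyG τ z)⁻¹

/-- `μ` has a regularly varying tail of index `−α`. -/
def RegVarTail (μ : Measure ℝ) (α : ℝ) : Prop :=
  (∀ x : ℝ, 0 ≤ x → 0 < μ (Set.Ioi x)) ∧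
  ∀ t : ℝ, 0 < t →
    Filter.Tendsto (fun x : ℝ => (μ (Set.Ioi (t * x))).toReal / (μ (Set.Ioi x)).toReal)
      Filter.atTop (nhds (t ^ (-α)))

/-- the principle of one large jump for Boolean-subexponential distributions. -/
theorem boolean_one_large_jump
    (μ : Measure ℝ) [IsProbabilityMeasure μ] (hsupp : μ (Set.Iio (0 : ℝ)) = 0)
    (F : ℝ → ℝ) (hF : F = fun y : ℝ => (μ (Set.Iic y)).toReal)
    (hpos : ∀ y : ℝ, 0 ≤ y → 0 < 1 - F y)
    (hsub : ∀ n : ℕ, 1 ≤ n → ∀ ρ : Measure ℝ, IsProbabilityMeasure ρ →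
      (∀ z : ℂ, 0 < z.im → Ktrans ρ z = (n : ℂ) * Ktrans μ z) →
      Filter.Tendsto
        (fun y : ℝ => (ρ (Set.Ioi y)).toReal / ((n : ℝ) * (1 - F y)))
        Filter.atTop (nhds 1))
    (n : ℕ) (hn : 1 ≤ n)
    (ρ : Measure ℝ) [IsProbabilityMeasure ρ]
    (hK : ∀ z : ℂ, 0 < z.im → Ktrans ρ z = (n : ℂ) * Ktrans μ z) :
    Filter.Tendsto
      (fun y : ℝ => (ρ (Set.Ioi y)).toReal /
        (1 - F y / ((n : ℝ) - ((n : ℝ) - 1) * F y)))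
      Filter.atTop (nhds 1) := by
  have hFle : ∀ y : ℝ, F y ≤ 1 := by
    intro y
    rw [hF]
    have : μ (Set.Iic y) ≤ μ Set.univ := measure_mono (subset_univ _)
    have h1 : (μ (Set.Iic y)).toReal ≤ (μ Set.univ).toReal :=
      ENNReal.toReal_mono (by simp) this
    simpa using h1
  -- F tends to 1 at top
  have hFtend : Tendsto F atTop (nhds 1) := by
    have h := MeasureTheory.tendsto_measure_Iic_atTop μ
    rw [measure_univ] at h
    have h2 : Tendsto (fun y : ℝ => (μ (Set.Iic y)).toReal) atTop (nhds ((1 : ENNReal).toReal)) :=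
      (ENNReal.tendsto_toReal (by simp)).comp h
    simpa [hF] using h2
  -- g := n - (n-1) F tends to 1
  have hgtend : Tendsto (fun y : ℝ => (n : ℝ) - ((n : ℝ) - 1) * F y) atTop (nhds 1) := by
    have : Tendsto (fun y : ℝ => (n : ℝ) - ((n : ℝ) - 1) * F y) atTop
        (nhds ((n : ℝ) - ((n : ℝ) - 1) * 1)) :=
      (tendsto_const_nhds.sub (tendsto_const_nhds.mul hFtend))
    simpa using this
  have hmain := hsub n hn ρ inferInstance hK
  have hprod : Tendsto
      (fun y : ℝ => ((ρ (Set.Ioi y)).toReal / ((n : ℝ) * (1 - F y))) *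
        ((n : ℝ) - ((n : ℝ) - 1) * F y)) atTop (nhds 1) := by
    simpa using hmain.mul hgtend
  refine hprod.congr' ?_
  filter_upwards [eventually_ge_atTop (0 : ℝ)] with y hy
  have h1 : (0 : ℝ) < 1 - F y := hpos y hy
  have hg : (0 : ℝ) < (n : ℝ) - ((n : ℝ) - 1) * F y := by
    have hn1 : (1 : ℝ) ≤ (n : ℝ) := by exact_mod_cast hn
    nlinarith [hFle y]
  have hne : (1 : ℝ) - F y / ((n : ℝ) - ((n : ℝ) - 1) * F y)
      = (n : ℝ) * (1 - F y) / ((n : ℝ) - ((n : ℝ) - 1) * F y) := by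
    rw [one_sub_div hg.ne']
    ring
  rw [hne]
  field_simp
end
end

section
/- Let α ≥ 0 and let F be the distribution function of a probability measure on [0,∞) with regularly varying tail of index −α (i.e. 1 − F(x) > 0 for all x and (1 − F(tx))/(1 − F(x)) → t^{−α} as x → ∞ for all t > 0). Then for every integer n ≥ 1, as y → ∞ the tails of the n-fold Boolean max, free max and classical max convolution powers of F are asymptotically equivalent: 1 − F(y)/(n − (n−1)F(y)) ~ 1 − max(nF(y) − (n−1), 0) ~ 1 − F(y)^n ~ n(1 − F(y)), where u(y) ~ v(y) means u(y)/v(y) → 1 as y → ∞. -/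
open MeasureTheory Filter Set

/-- asymptotic equivalence of the tails of the Boolean max, free max and
classical max convolution powers of a regularly varying distribution function. -/
theorem max_convolution_tail_equivalence
    (α : ℝ) (hα : 0 ≤ α)
    (μ : Measure ℝ) [IsProbabilityMeasure μ] (hsupp : μ (Set.Iio (0 : ℝ)) = 0)
    (F : ℝ → ℝ) (hF : F = fun y : ℝ => (μ (Set.Iic y)).toReal)
    (hpos : ∀ x : ℝ, 0 < 1 - F x)
    (hreg : ∀ t : ℝ, 0 < t →
      Filter.Tendsto (fun x : ℝ => (1 - F (t * x)) / (1 - F x))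
        Filter.atTop (nhds (t ^ (-α))))
    (n : ℕ) (hn : 1 ≤ n) :
    Filter.Tendsto
      (fun y : ℝ => (1 - F y / ((n : ℝ) - ((n : ℝ) - 1) * F y)) / ((n : ℝ) * (1 - F y)))
      Filter.atTop (nhds 1) ∧
    Filter.Tendsto
      (fun y : ℝ => (1 - max ((n : ℝ) * F y - ((n : ℝ) - 1)) 0) / ((n : ℝ) * (1 - F y)))
      Filter.atTop (nhds 1) ∧
    Filter.Tendsto
      (fun y : ℝ => (1 - (F y) ^ n) / ((n : ℝ) * (1 - F y)))
      Filter.atTop (nhds 1) := by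
  have hn1 : (1 : ℝ) ≤ (n : ℝ) := by exact_mod_cast hn
  have hn0 : (0 : ℝ) < (n : ℝ) := by linarith
  have hF0 : ∀ y, 0 ≤ F y := by
    intro y; rw [hF]; exact ENNReal.toReal_nonneg
  have hFlt : ∀ y, F y < 1 := fun y => by linarith [hpos y]
  -- F tends to 1 at infinity
  have hF1 : Tendsto F atTop (nhds 1) := by
    have h := MeasureTheory.tendsto_measure_Iic_atTop (μ := μ)
    rw [measure_univ] at h
    have h2 := (ENNReal.tendsto_toReal ENNReal.one_ne_top).comp h
    rw [hF]; exact h2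
  refine ⟨?_, ?_, ?_⟩
  · -- Boolean
    have key : ∀ y, (1 - F y / ((n : ℝ) - ((n : ℝ) - 1) * F y)) / ((n : ℝ) * (1 - F y))
        = 1 / ((n : ℝ) - ((n : ℝ) - 1) * F y) := by
      intro y
      have hd : (1 : ℝ) ≤ (n : ℝ) - ((n : ℝ) - 1) * F y := by
        nlinarith [hF0 y, hFlt y]
      have hne : ((n : ℝ) - ((n : ℝ) - 1) * F y) ≠ 0 := by linarith
      have h1 : (1 : ℝ) - F y ≠ 0 := ne_of_gt (hpos y)
      rw [eq_div_iff hne, div_mul_eq_mul_div, div_eq_iff (mul_ne_zero (ne_of_gt hn0) h1)]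
      have hc : F y / ((n : ℝ) - ((n : ℝ) - 1) * F y) * ((n : ℝ) - ((n : ℝ) - 1) * F y) = F y :=
        div_mul_cancel₀ _ hne
      linear_combination (-1 : ℝ) * hc
    have hlim : Tendsto (fun y => (n : ℝ) - ((n : ℝ) - 1) * F y) atTop
        (nhds ((n : ℝ) - ((n : ℝ) - 1) * 1)) :=
      tendsto_const_nhds.sub (tendsto_const_nhds.mul hF1)
    have h2 := Tendsto.div
      (tendsto_const_nhds : Tendsto (fun _ : ℝ => (1 : ℝ)) atTop (nhds 1)) hlim (by norm_num)
    simp only [key]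
    have h3 : (1 : ℝ) / ((n : ℝ) - ((n : ℝ) - 1) * 1) = 1 := by norm_num
    rw [h3] at h2
    exact h2
  · -- Free
    have hev : ∀ᶠ y in atTop,
        (1 - max ((n : ℝ) * F y - ((n : ℝ) - 1)) 0) / ((n : ℝ) * (1 - F y)) = 1 := by
      have hlt : ((n : ℝ) - 1) / n < 1 := by
        rw [div_lt_one hn0]; linarith
      filter_upwards [hF1.eventually (eventually_gt_nhds hlt)] with y hy
      have h0 : 0 ≤ (n : ℝ) * F y - ((n : ℝ) - 1) := by
        rw [sub_nonneg]
        calc (n : ℝ) - 1 = ((n : ℝ) - 1) / n * n := by field_simp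
        _ ≤ F y * n := by
          apply mul_le_mul_of_nonneg_right (le_of_lt hy) (le_of_lt hn0)
        _ = (n : ℝ) * F y := mul_comm _ _
      rw [max_eq_left h0]
      have heq : 1 - ((n : ℝ) * F y - ((n : ℝ) - 1)) = (n : ℝ) * (1 - F y) := by ring
      rw [heq, div_self (ne_of_gt (mul_pos hn0 (hpos y)))]
    exact Tendsto.congr' (Filter.EventuallyEq.symm hev) tendsto_const_nhds
  · -- Classical
    have hsum : Tendsto (fun y => ∑ i ∈ Finset.range n, F y ^ i) atTop (nhds (n : ℝ)) := by
      have h := tendsto_finset_sum (Finset.range n)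
        (fun i _ => hF1.pow i)
      simpa using h
    have hdiv := hsum.div_const (n : ℝ)
    rw [div_self (ne_of_gt hn0)] at hdiv
    refine Tendsto.congr (fun y => ?_) hdiv
    have hgs : 1 - F y ^ n = (∑ i ∈ Finset.range n, F y ^ i) * (1 - F y) := by
      linear_combination geom_sum_mul (F y) n
    rw [hgs, mul_comm (n : ℝ) (1 - F y), mul_comm _ (1 - F y),
      mul_div_mul_left _ _ (ne_of_gt (hpos y))]
end

section
/- Stability of the class Z_{1,p} under z ↦ A/(1±A): let p ≥ 1 be an integer and let A be an analytic function whose domain contains, for every κ > 0, a cone Δ_{κ,δ} for some δ = δ(κ) > 0. Suppose there are real numbers a₁, …, a_p such that r_A(z) := z^{−p}(A(z) − Σ_{j=1}^p a_j z^j) satisfies: z/r_A(z) → 0 and r_A(z) → 0 as z → 0 n.t., and Re r_A(−i y^{−1})/Im r_A(−i y^{−1}) converges to a nonzero finite limit as y → ∞. Let B(z) = A(z)/(1+A(z)) or B(z) = A(z)/(1−A(z)). Then there exist real numbers b₁, …, b_p such that r_B(z) := z^{−p}(B(z) − Σ_{j=1}^p b_j z^j) satisfies the same three conditions; moreover r_B(z)/r_A(z)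 → 1 as z → 0 n.t., Re r_B(−i y^{−1})/Re r_A(−i y^{−1}) → 1 and Im r_B(−i y^{−1})/Im r_A(−i y^{−1}) → 1 as y → ∞. -/
open Filter Set Complex

noncomputable section

/-- The cone `Δ_{κ,δ} = {z ∈ ℂ : Im z < 0, |Re z| < −κ·Im z, |z| < δ}`. -/
def coneLower (κ δ : ℝ) : Set ℂ :=
  {z : ℂ | z.im < 0 ∧ |z.re| < -κ * z.im ∧ ‖z‖ < δ}

/-- Non-tangential convergence `f(z) → L` as `z → 0` n.t. -/
def NTtendsto (f : ℂ → ℂ) (L : ℂ) : Prop :=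
  ∀ κ : ℝ, 0 < κ → ∀ ε : ℝ, 0 < ε → ∃ δ : ℝ, 0 < δ ∧
    ∀ z ∈ coneLower κ δ, ‖f z - L‖ < ε

/-- The remainder of `A` relative to the polynomial with coefficients `a₁, …, a_p`:
`r_A(z) = z^{−p}(A(z) − ∑_{j=1}^p a_j z^j)`. -/
def remainder (A : ℂ → ℂ) (p : ℕ) (a : ℕ → ℝ) (z : ℂ) : ℂ :=
  (A z - ∑ j ∈ Finset.Icc 1 p, (a j : ℂ) * z ^ j) / z ^ p

/-- Evaluation of a function at the boundary point `−i y⁻¹`. -/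
def ntEval (f : ℂ → ℂ) (y : ℝ) : ℂ := f (-Complex.I * (y : ℂ)⁻¹)

lemma coneLower_mono {κ δ δ' : ℝ} (h : δ ≤ δ') : coneLower κ δ ⊆ coneLower κ δ' :=
  fun z hz => ⟨hz.1, hz.2.1, hz.2.2.trans_le h⟩

lemma isOpen_coneLower (κ δ : ℝ) : IsOpen (coneLower κ δ) := by
  have h1 : IsOpen {z : ℂ | z.im < 0} := isOpen_lt Complex.continuous_im continuous_const
  have h2 : IsOpen {z : ℂ | |z.re| < -κ * z.im} :=
    isOpen_lt (continuous_abs.comp Complex.continuous_re)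
      (continuous_const.mul Complex.continuous_im)
  have h3 : IsOpen {z : ℂ | ‖z‖ < δ} :=
    isOpen_lt continuous_norm continuous_const
  exact h1.inter (h2.inter h3)

lemma ne_zero_of_mem_coneLower {κ δ : ℝ} {z : ℂ} (hz : z ∈ coneLower κ δ) : z ≠ 0 := by
  intro h; rw [h] at hz; exact lt_irrefl _ (hz.1.trans_le (by simp))

lemma convex_coneLower (κ δ : ℝ) : Convex ℝ (coneLower κ δ) := by
  have : coneLower κ δ =
      ({z : ℂ | z.im < 0} ∩ ({z : ℂ | z.re < -κ * z.im} ∩ {z : ℂ | -z.re < -κ * z.im}))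
        ∩ Metric.ball (0 : ℂ) δ := by
    ext z
    simp only [coneLower, mem_inter_iff, mem_setOf_eq, Metric.mem_ball, Complex.dist_eq,
      sub_zero, abs_lt]
    constructor
    · rintro ⟨h1, h2, h3⟩; exact ⟨⟨h1, h2.2, by linarith [h2.1]⟩, h3⟩
    · rintro ⟨⟨h1, h2, h3⟩, h4⟩; exact ⟨h1, ⟨by linarith, h2⟩, h4⟩
  rw [this]
  refine Convex.inter (Convex.inter ?_ (Convex.inter ?_ ?_)) (convex_ball 0 δ)
  · exact convex_halfSpace_lt (LinearMap.isLinear Complex.imLm) 0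
  · have h : Convex ℝ {z : ℂ | (Complex.reLm + κ • Complex.imLm) z < 0} :=
      convex_halfSpace_lt (LinearMap.isLinear _) 0
    have e : {z : ℂ | z.re < -κ * z.im} = {z : ℂ | (Complex.reLm + κ • Complex.imLm) z < 0} := by
      ext z
      simp only [mem_setOf_eq, LinearMap.add_apply, LinearMap.smul_apply, Complex.reLm_coe,
        Complex.imLm_coe, smul_eq_mul]
      constructor <;> intro hz <;> linarith
    rw [e]; exact h
  · have h : Convex ℝ {z : ℂ | (-Complex.reLm + κ • Complex.imLm) z < 0} :=
      convex_halfSpace_lt (LinearMap.isLinear _) 0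
    have e : {z : ℂ | -z.re < -κ * z.im} = {z : ℂ | (-Complex.reLm + κ • Complex.imLm) z < 0} := by
      ext z
      simp only [mem_setOf_eq, LinearMap.add_apply, LinearMap.neg_apply, LinearMap.smul_apply,
        Complex.reLm_coe, Complex.imLm_coe, smul_eq_mul]
      constructor <;> intro hz <;> linarith
    rw [e]; exact h

/-- The nontangential filter with aperture κ. -/
def ntl (κ : ℝ) : Filter ℂ := ⨅ δ ∈ Set.Ioi (0:ℝ), Filter.principal (coneLower κ δ)

lemma ntl_hasBasis (κ : ℝ) : (ntl κ).HasBasis (fun δ : ℝ => δ ∈ Set.Ioi 0) (coneLower κ) := by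
  refine Filter.hasBasis_biInf_principal ?_ ⟨1, by norm_num⟩
  intro d1 h1 d2 h2
  exact ⟨min d1 d2, Set.mem_Ioi.2 (lt_min h1 h2), coneLower_mono (min_le_left _ _),
    coneLower_mono (min_le_right _ _)⟩

lemma ntt_iff {f : ℂ → ℂ} {L : ℂ} :
    NTtendsto f L ↔ ∀ κ : ℝ, 0 < κ → Filter.Tendsto f (ntl κ) (nhds L) := by
  constructor
  · intro h κ hκ
    rw [(ntl_hasBasis κ).tendsto_iff Metric.nhds_basis_ball]
    intro ε hε
    obtain ⟨δ, hδ, hh⟩ := h κ hκ ε hε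
    exact ⟨δ, hδ, fun z hz => by simpa [Metric.mem_ball, Complex.dist_eq] using hh z hz⟩
  · intro h κ hκ ε hε
    have := ((ntl_hasBasis κ).tendsto_iff Metric.nhds_basis_ball).1 (h κ hκ) ε hε
    obtain ⟨δ, hδ, hh⟩ := this
    exact ⟨δ, hδ, fun z hz => by simpa [Metric.mem_ball, Complex.dist_eq] using hh z hz⟩

lemma tendsto_id_ntl (κ : ℝ) : Filter.Tendsto id (ntl κ) (nhds (0:ℂ)) := by
  rw [(ntl_hasBasis κ).tendsto_iff Metric.nhds_basis_ball]
  intro ε hε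
  exact ⟨ε, hε, fun z hz => by simpa [Metric.mem_ball, Complex.dist_eq] using hz.2.2⟩

lemma eventually_ne_zero_ntl (κ : ℝ) : ∀ᶠ z in ntl κ, z ≠ 0 :=
  (ntl_hasBasis κ).eventually_iff.2 ⟨1, by norm_num, fun z hz => ne_zero_of_mem_coneLower hz⟩

lemma tendsto_axis_ntl (κ : ℝ) (hκ : 0 < κ) :
    Filter.Tendsto (fun y : ℝ => -Complex.I * (y : ℂ)⁻¹) Filter.atTop (ntl κ) := by
  rw [Filter.atTop_basis.tendsto_iff (ntl_hasBasis κ)]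
  intro δ hδ
  have hδ' : (0:ℝ) < δ := hδ
  refine ⟨max 1 (2/δ), trivial, fun y hy => ?_⟩
  have hy1 : (1:ℝ) ≤ y := le_trans (le_max_left _ _) hy
  have hy0 : 0 < y := lt_of_lt_of_le one_pos hy1
  have hy2 : 2/δ ≤ y := le_trans (le_max_right _ _) hy
  have key : -Complex.I * (y : ℂ)⁻¹ = Complex.ofReal (y⁻¹) * (-Complex.I) := by
    push_cast; ring
  have h1 : (-Complex.I * (y : ℂ)⁻¹).re = 0 := by
    rw [key]; simp [Complex.re_ofReal_mul]
  have h2 : (-Complex.I * (y : ℂ)⁻¹).im = -(y⁻¹) := by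
    rw [key]; simp [Complex.im_ofReal_mul]
  have h3 : ‖(-Complex.I * (y : ℂ)⁻¹)‖ = y⁻¹ := by
    rw [key, norm_mul, norm_neg, Complex.norm_I, Complex.norm_real, Real.norm_eq_abs,
      abs_of_pos (inv_pos.2 hy0), mul_one]
  have hyd : y⁻¹ ≤ δ/2 := by
    rw [inv_le_comm₀ hy0 (by positivity)]
    calc (δ/2)⁻¹ = 2/δ := by ring
      _ ≤ y := hy2
  refine ⟨?_, ?_, ?_⟩
  · rw [h2]; simp [inv_pos.2 hy0]
  · rw [h1, h2]; rw [abs_zero]; nlinarith [inv_pos.2 hy0]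
  · rw [h3]; linarith

lemma remainder_spec (A : ℂ → ℂ) (p : ℕ) (a : ℕ → ℝ) {z : ℂ} (hz : z ≠ 0) :
    A z = (∑ j ∈ Finset.Icc 1 p, (a j : ℂ) * z ^ j) + z ^ p * remainder A p a z := by
  rw [remainder]
  field_simp
  ring

lemma remainder_analyticOnNhd (A : ℂ → ℂ) (p : ℕ) (a : ℕ → ℝ) {U : Set ℂ}
    (hA : AnalyticOnNhd ℂ A U) (hU : ∀ z ∈ U, z ≠ 0) :
    AnalyticOnNhd ℂ (remainder A p a) U := by
  have h1 : AnalyticOnNhd ℂ (fun z : ℂ => ∑ j ∈ Finset.Icc 1 p, (a j : ℂ) * z ^ j) U := by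
    apply Finset.analyticOnNhd_fun_sum
    intro j _
    exact (analyticOnNhd_const).mul (analyticOnNhd_id.pow j)
  exact (hA.sub h1).div (analyticOnNhd_id.pow p) fun z hz => pow_ne_zero _ (hU z hz)

lemma r_ne_zero (p : ℕ) (A : ℂ → ℂ) (a : ℕ → ℝ)
    (hanal : ∀ κ : ℝ, 0 < κ → ∃ δ : ℝ, 0 < δ ∧ AnalyticOnNhd ℂ A (coneLower κ δ))
    (hR2a : NTtendsto (fun z : ℂ => z / remainder A p a z) 0)
    (hR3 : ∃ L : ℝ, L ≠ 0 ∧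
      Filter.Tendsto
        (fun y : ℝ => (ntEval (remainder A p a) y).re / (ntEval (remainder A p a) y).im)
        Filter.atTop (nhds L))
    (κ : ℝ) (hκ : 0 < κ) : ∀ᶠ z in ntl κ, remainder A p a z ≠ 0 := by
  obtain ⟨δ₁, hδ₁, hA⟩ := hanal κ hκ
  obtain ⟨δ₂, hδ₂, h2⟩ := hR2a κ hκ 1 one_pos
  set δ := min δ₁ δ₂ with hδdef
  have hδ : 0 < δ := lt_min hδ₁ hδ₂
  set r := remainder A p a with hrdef
  set U := coneLower κ δ with hUdef
  have hUopen : IsOpen U := isOpen_coneLower κ δ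
  have hAU : AnalyticOnNhd ℂ A U := hA.mono (coneLower_mono (min_le_left _ _))
  have hr : AnalyticOnNhd ℂ r U :=
    remainder_analyticOnNhd A p a hAU fun z hz => ne_zero_of_mem_coneLower hz
  rw [(ntl_hasBasis κ).eventually_iff]
  refine ⟨δ, hδ, fun z₀ hz₀ => ?_⟩
  intro hrz₀
  by_cases hev : ∀ᶠ w in nhds z₀, r w = 0
  · -- identity theorem : r ≡ 0 on U, contradicting hR3
    have hEq : Set.EqOn r 0 U := by
      apply hr.eqOn_zero_of_preconnected_of_eventuallyEq_zero
        (convex_coneLower κ δ).isPreconnected hz₀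
      filter_upwards [hev] with w hw using hw
    obtain ⟨L, hL, hLt⟩ := hR3
    have hmem : ∀ᶠ z in ntl κ, z ∈ U := (ntl_hasBasis κ).eventually_iff.2 ⟨δ, hδ, fun z hz => hz⟩
    have haxis : ∀ᶠ (y : ℝ) in Filter.atTop, (-Complex.I * (y : ℂ)⁻¹) ∈ U := by
      have ht := tendsto_axis_ntl κ hκ
      exact ht.eventually hmem
    have hzero : (fun y : ℝ => (ntEval r y).re / (ntEval r y).im) =ᶠ[Filter.atTop]
        fun _ => (0:ℝ) := by
      filter_upwards [haxis] with y hy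
      rw [ntEval, hEq hy]
      simp
    have : Filter.Tendsto (fun _ : ℝ => (0:ℝ)) Filter.atTop (nhds L) := hLt.congr' hzero
    exact hL (tendsto_nhds_unique this tendsto_const_nhds)
  · -- frequently nonzero near z₀ : contradict hR2a
    have hfreq : ∃ᶠ w in nhds z₀, r w ≠ 0 := Filter.not_eventually.1 hev
    have hz₀ne : z₀ ≠ 0 := ne_zero_of_mem_coneLower hz₀
    have habs : 0 < ‖z₀‖ := by simpa using hz₀ne
    have hcont : ContinuousAt r z₀ := (hr z₀ hz₀).continuousAt
    have hV : {w : ℂ | ‖r w‖ < ‖z₀‖ / 2} ∈ nhds z₀ := by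
      have : {w : ℂ | r w ∈ Metric.ball (0:ℂ) (‖z₀‖ / 2)} ∈ nhds z₀ := by
        apply hcont
        rw [hrz₀]
        exact Metric.ball_mem_nhds _ (half_pos habs)
      filter_upwards [this] with w hw
      simpa [Metric.mem_ball, Complex.dist_eq] using hw
    have hW : Metric.ball z₀ (‖z₀‖ / 2) ∈ nhds z₀ :=
      Metric.ball_mem_nhds _ (half_pos habs)
    have hUn : U ∈ nhds z₀ := hUopen.mem_nhds hz₀
    have hall : ∀ᶠ w in nhds z₀, ‖r w‖ < ‖z₀‖ / 2 ∧
        dist w z₀ < ‖z₀‖ / 2 ∧ w ∈ U := by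
      filter_upwards [hV, hW, hUn] with w h1 h2 h3
      exact ⟨h1, Metric.mem_ball.1 h2, h3⟩
    obtain ⟨w, hwne, hw1, hw2, hw3⟩ := (hfreq.and_eventually hall).exists
    -- |w| > |z₀|/2 and 0 < |r w| < |z₀|/2, so |w / r w| > 1
    have hrw : 0 < ‖r w‖ := by simpa using hwne
    have hwbig : ‖z₀‖ / 2 < ‖w‖ := by
      have hd : ‖z₀ - w‖ < ‖z₀‖ / 2 := by
        rw [Complex.dist_eq] at hw2
        calc ‖z₀ - w‖ = ‖w - z₀‖ := by rw [norm_sub_rev]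
          _ < _ := hw2
      have htri : ‖z₀‖ - ‖w‖ ≤ ‖z₀ - w‖ := by
        simpa using norm_sub_norm_le z₀ w
      linarith
    have hgt : 1 < ‖w / r w‖ := by
      rw [norm_div, lt_div_iff₀ hrw]
      linarith
    have hlt := h2 w (coneLower_mono (min_le_right δ₁ δ₂) hw3)
    rw [sub_zero] at hlt
    exact absurd hlt (not_lt.2 (le_of_lt hgt))

lemma geom_aux (σ : ℝ) (Pa : Polynomial ℝ) (n : ℕ) :
    (∑ k ∈ Finset.Icc 1 n, Polynomial.C ((-σ)^(k-1)) * Pa^k) * (1 + Polynomial.C σ * Pa)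
      = Pa - Polynomial.C ((-σ)^n) * Pa^(n+1) := by
  induction n with
  | zero => simp
  | succ n ih =>
    rw [Finset.sum_Icc_succ_top (by omega : 1 ≤ n + 1)]
    rw [add_mul, ih]
    have h1 : ((-σ)^(n+1-1) : ℝ) = (-σ)^n := by norm_num
    have h2 : ((-σ)^(n+1) : ℝ) = (-σ)^n * (-σ) := pow_succ _ _
    rw [h1, h2, map_mul]
    ring_nf
    rw [map_neg]
    ring

lemma coeff_sum_CX (c : ℕ → ℝ) (p d : ℕ) :
    (∑ j ∈ Finset.Icc 1 p, Polynomial.C (c j) * Polynomial.X ^ j).coeff d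
      = if d ∈ Finset.Icc 1 p then c d else 0 := by
  rw [Polynomial.finset_sum_coeff]
  simp [Polynomial.coeff_C_mul, Polynomial.coeff_X_pow, mul_ite, Finset.sum_ite_eq']


section Aux

variable (σ : ℝ) (a : ℕ → ℝ) (p : ℕ)

def auxPa : Polynomial ℝ := ∑ j ∈ Finset.Icc 1 p, Polynomial.C (a j) * Polynomial.X ^ j

def auxS : Polynomial ℝ := ∑ k ∈ Finset.Icc 1 p, Polynomial.C ((-σ)^(k-1)) * (auxPa a p) ^ k

def auxb : ℕ → ℝ := fun j => (auxS σ a p).coeff j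

def auxQ : Polynomial ℝ :=
  ∑ j ∈ Finset.Icc 1 p, Polynomial.C (auxb σ a p j) * Polynomial.X ^ j

def auxE : Polynomial ℝ :=
  Polynomial.C ((-σ)^p) * (auxPa a p)^(p+1)
    + (auxS σ a p - auxQ σ a p) * (1 + Polynomial.C σ * auxPa a p)

lemma X_dvd_auxPa : Polynomial.X ∣ auxPa a p := by
  rw [Polynomial.X_dvd_iff, auxPa, coeff_sum_CX]
  simp

lemma X_dvd_auxS : Polynomial.X ∣ auxS σ a p := by
  apply Finset.dvd_sum
  intro k hk
  have hk1 : k ≠ 0 := by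
    have := (Finset.mem_Icc.1 hk).1; omega
  exact dvd_mul_of_dvd_right (dvd_pow (X_dvd_auxPa a p) hk1) _

lemma auxE_dvd : Polynomial.X ^ (p+1) ∣ auxE σ a p := by
  refine dvd_add (Dvd.dvd.mul_left (pow_dvd_pow_of_dvd (X_dvd_auxPa a p) _) _)
    (Dvd.dvd.mul_right ?_ _)
  rw [Polynomial.X_pow_dvd_iff]
  intro d hd
  rw [Polynomial.coeff_sub, auxQ, coeff_sum_CX]
  rcases eq_or_ne d 0 with h0 | h0
  · subst h0
    have : (auxS σ a p).coeff 0 = 0 := Polynomial.X_dvd_iff.1 (X_dvd_auxS σ a p)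
    simp [this]
  · have hmem : d ∈ Finset.Icc 1 p := Finset.mem_Icc.2 ⟨by omega, by omega⟩
    simp [hmem, auxb]

def auxF : Polynomial ℝ := Classical.choose (auxE_dvd σ a p)

lemma auxF_spec : auxE σ a p = Polynomial.X ^ (p+1) * auxF σ a p :=
  Classical.choose_spec (auxE_dvd σ a p)

lemma aux_pq : auxQ σ a p * (1 + Polynomial.C σ * auxPa a p)
    = auxPa a p - Polynomial.X ^ (p+1) * auxF σ a p := by
  rw [← auxF_spec]
  have hgeom := geom_aux σ (auxPa a p) p
  rw [auxE]
  have hSQ : auxS σ a p = ∑ k ∈ Finset.Icc 1 p, Polynomial.C ((-σ)^(k-1)) * (auxPa a p) ^ k :=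
    rfl
  rw [← hSQ] at hgeom
  linear_combination hgeom

lemma auxPa_eval (z : ℂ) :
    Polynomial.aeval z (auxPa a p) = ∑ j ∈ Finset.Icc 1 p, (a j : ℂ) * z ^ j := by
  rw [auxPa, map_sum]
  refine Finset.sum_congr rfl fun j _ => ?_
  simp [Polynomial.aeval_C, Complex.coe_algebraMap]

lemma auxQ_eval (z : ℂ) :
    Polynomial.aeval z (auxQ σ a p) = ∑ j ∈ Finset.Icc 1 p, (auxb σ a p j : ℂ) * z ^ j := by
  rw [auxQ, map_sum]
  refine Finset.sum_congr rfl fun j _ => ?_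
  simp [Polynomial.aeval_C, Complex.coe_algebraMap]

lemma auxQ_eval_zero : Polynomial.aeval (0:ℂ) (auxQ σ a p) = 0 := by
  rw [auxQ_eval]
  refine Finset.sum_eq_zero fun j hj => ?_
  have : j ≠ 0 := by have := (Finset.mem_Icc.1 hj).1; omega
  simp [zero_pow this]

lemma auxPa_eval_zero : Polynomial.aeval (0:ℂ) (auxPa a p) = 0 := by
  rw [auxPa_eval]
  refine Finset.sum_eq_zero fun j hj => ?_
  have : j ≠ 0 := by have := (Finset.mem_Icc.1 hj).1; omega
  simp [zero_pow this]

lemma aux_eval (z : ℂ) :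
    Polynomial.aeval z (auxQ σ a p) * (1 + (σ:ℂ) * Polynomial.aeval z (auxPa a p))
      = Polynomial.aeval z (auxPa a p) - z^(p+1) * Polynomial.aeval z (auxF σ a p) := by
  have := congrArg (Polynomial.aeval z) (aux_pq σ a p)
  simpa [map_mul, map_add, map_sub, map_pow, Polynomial.aeval_C,
    Complex.coe_algebraMap] using this

/-- the pointwise identity for the remainder of `A/(1+σA)`. -/
lemma point_id (A : ℂ → ℂ) {z : ℂ} (hz : z ≠ 0) (hA1 : 1 + (σ:ℂ) * A z ≠ 0) :
    remainder (fun w => A w / (1 + (σ:ℂ) * A w)) p (auxb σ a p) z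
      = (remainder A p a z * (1 - (σ:ℂ) * Polynomial.aeval z (auxQ σ a p))
          + z * Polynomial.aeval z (auxF σ a p)) / (1 + (σ:ℂ) * A z) := by
  have hr : remainder A p a z * z^p = A z - Polynomial.aeval z (auxPa a p) := by
    rw [auxPa_eval, remainder]
    field_simp
  have hq := aux_eval σ a p z
  rw [remainder, ← auxQ_eval]
  set az := A z
  set pz := Polynomial.aeval z (auxPa a p)
  set qz := Polynomial.aeval z (auxQ σ a p)
  set fz := Polynomial.aeval z (auxF σ a p)
  set rz := remainder A p a z
  have key : az - qz*(1+(σ:ℂ)*az) = (rz*(1-(σ:ℂ)*qz) + z*fz) * z^p := by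
    linear_combination -hq - (1-(σ:ℂ)*qz)*hr
  rw [div_sub' hA1, div_div]
  have key2 : az - (1 + (σ:ℂ)*az) * qz = (rz*(1-(σ:ℂ)*qz) + z*fz) * z^p := by
    linear_combination key
  rw [key2, mul_comm ((1:ℂ)+(σ:ℂ)*az) (z^p), ← div_div,
    mul_div_cancel_right₀ _ (pow_ne_zero p hz)]

end Aux

lemma div_div_div_cancel' {K : Type*} [Field K] (x a c : K) (hc : c ≠ 0) :
    (x/c)/(a/c) = x/a := by
  rcases eq_or_ne a 0 with h | h
  · simp [h]
  · field_simp


/-- stability of the class `Z_{1,p}` under `A ↦ A/(1 ± A)`. -/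
theorem Z1p_stable_under_moebius
    (p : ℕ) (hp : 1 ≤ p) (A : ℂ → ℂ)
    (hanal : ∀ κ : ℝ, 0 < κ → ∃ δ : ℝ, 0 < δ ∧ AnalyticOnNhd ℂ A (coneLower κ δ))
    (a : ℕ → ℝ)
    (hR2a : NTtendsto (fun z : ℂ => z / remainder A p a z) 0)
    (hR2b : NTtendsto (remainder A p a) 0)
    (hR3 : ∃ L : ℝ, L ≠ 0 ∧
      Filter.Tendsto
        (fun y : ℝ => (ntEval (remainder A p a) y).re / (ntEval (remainder A p a) y).im)
        Filter.atTop (nhds L))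
    (B : ℂ → ℂ)
    (hB : B = (fun z : ℂ => A z / (1 + A z)) ∨ B = (fun z : ℂ => A z / (1 - A z))) :
    ∃ b : ℕ → ℝ,
      NTtendsto (fun z : ℂ => z / remainder B p b z) 0 ∧
      NTtendsto (remainder B p b) 0 ∧
      (∃ L : ℝ, L ≠ 0 ∧
        Filter.Tendsto
          (fun y : ℝ => (ntEval (remainder B p b) y).re / (ntEval (remainder B p b) y).im)
          Filter.atTop (nhds L)) ∧
      NTtendsto (fun z : ℂ => remainder B p b z / remainder A p a z) 1 ∧
      Filter.Tendsto
        (fun y : ℝ => (ntEval (remainder B p b) y).re / (ntEval (remainder A p a) y).re)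
        Filter.atTop (nhds 1) ∧
      Filter.Tendsto
        (fun y : ℝ => (ntEval (remainder B p b) y).im / (ntEval (remainder A p a) y).im)
        Filter.atTop (nhds 1) := by
  obtain ⟨σ, hσB⟩ : ∃ σ : ℝ, B = fun z : ℂ => A z / (1 + (σ:ℂ) * A z) := by
    rcases hB with h | h
    · refine ⟨1, ?_⟩; rw [h]; funext z; norm_num
    · refine ⟨-1, ?_⟩; rw [h]; funext z; norm_num
      rw [sub_eq_add_neg]
  set b := auxb σ a p with hbdef
  set r := remainder A p a with hrdef
  set rB := remainder B p b with hrBdef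
  -- A tends to 0 nontangentially
  have hAz : ∀ κ : ℝ, 0 < κ → Filter.Tendsto A (ntl κ) (nhds 0) := by
    intro κ hκ
    have hev : A =ᶠ[ntl κ] fun z => Polynomial.aeval z (auxPa a p) + z^p * r z := by
      filter_upwards [eventually_ne_zero_ntl κ] with z hz
      rw [auxPa_eval]; exact remainder_spec A p a hz
    have h1 : Filter.Tendsto (fun z : ℂ => Polynomial.aeval z (auxPa a p)) (ntl κ)
        (nhds (Polynomial.aeval (0:ℂ) (auxPa a p))) :=
      ((Polynomial.continuous_aeval (auxPa a p)).tendsto 0).comp (tendsto_id_ntl κ)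
    have h2 : Filter.Tendsto (fun z : ℂ => z^p * r z) (ntl κ) (nhds ((0:ℂ)^p * 0)) :=
      ((tendsto_id_ntl κ).pow p).mul ((ntt_iff.1 hR2b) κ hκ)
    refine Filter.Tendsto.congr' hev.symm ?_
    have := h1.add h2
    rw [auxPa_eval_zero] at this
    simpa using this
  have h1A : ∀ κ : ℝ, 0 < κ → ∀ᶠ z in ntl κ, 1 + (σ:ℂ) * A z ≠ 0 := by
    intro κ hκ
    have ht : Filter.Tendsto (fun z => 1 + (σ:ℂ) * A z) (ntl κ) (nhds (1 + (σ:ℂ) * 0)) :=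
      tendsto_const_nhds.add (tendsto_const_nhds.mul (hAz κ hκ))
    rw [mul_zero, add_zero] at ht
    exact ht.eventually_ne one_ne_zero
  have hrne : ∀ κ : ℝ, 0 < κ → ∀ᶠ z in ntl κ, r z ≠ 0 :=
    fun κ hκ => r_ne_zero p A a hanal hR2a hR3 κ hκ
  -- the key nontangential ratio limit
  have hratio : ∀ κ : ℝ, 0 < κ → Filter.Tendsto (fun z => rB z / r z) (ntl κ) (nhds 1) := by
    intro κ hκ
    have hev : (fun z => rB z / r z) =ᶠ[ntl κ]
        fun z => ((1 - (σ:ℂ) * Polynomial.aeval z (auxQ σ a p))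
          + (z / r z) * Polynomial.aeval z (auxF σ a p)) / (1 + (σ:ℂ) * A z) := by
      filter_upwards [eventually_ne_zero_ntl κ, h1A κ hκ, hrne κ hκ] with z hz h1 h2
      have : rB z = (r z * (1 - (σ:ℂ) * Polynomial.aeval z (auxQ σ a p))
          + z * Polynomial.aeval z (auxF σ a p)) / (1 + (σ:ℂ) * A z) := by
        rw [hrBdef, hσB]
        exact point_id σ a p A hz h1
      rw [this]
      field_simp
    have hQ : Filter.Tendsto (fun z : ℂ => Polynomial.aeval z (auxQ σ a p)) (ntl κ)
        (nhds (Polynomial.aeval (0:ℂ) (auxQ σ a p))) :=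
      ((Polynomial.continuous_aeval (auxQ σ a p)).tendsto 0).comp (tendsto_id_ntl κ)
    rw [auxQ_eval_zero] at hQ
    have hF : Filter.Tendsto (fun z : ℂ => Polynomial.aeval z (auxF σ a p)) (ntl κ)
        (nhds (Polynomial.aeval (0:ℂ) (auxF σ a p))) :=
      ((Polynomial.continuous_aeval (auxF σ a p)).tendsto 0).comp (tendsto_id_ntl κ)
    have hzr : Filter.Tendsto (fun z => z / r z) (ntl κ) (nhds 0) := (ntt_iff.1 hR2a) κ hκ
    refine Filter.Tendsto.congr' hev.symm ?_
    have hnum : Filter.Tendsto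
        (fun z => (1 - (σ:ℂ) * Polynomial.aeval z (auxQ σ a p))
          + (z / r z) * Polynomial.aeval z (auxF σ a p)) (ntl κ)
        (nhds ((1 - (σ:ℂ) * 0) + 0 * Polynomial.aeval (0:ℂ) (auxF σ a p))) :=
      (tendsto_const_nhds.sub (tendsto_const_nhds.mul hQ)).add (hzr.mul hF)
    rw [mul_zero, sub_zero, zero_mul, add_zero] at hnum
    have hden : Filter.Tendsto (fun z => 1 + (σ:ℂ) * A z) (ntl κ) (nhds (1 + (σ:ℂ) * 0)) :=
      tendsto_const_nhds.add (tendsto_const_nhds.mul (hAz κ hκ))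
    rw [mul_zero, add_zero] at hden
    have := hnum.div hden one_ne_zero
    rw [div_one] at this; exact this
  -- axis facts
  obtain ⟨L, hL0, hLt⟩ := hR3
  have hLt' : Filter.Tendsto
      (fun y : ℝ => (r (-Complex.I * (y:ℂ)⁻¹)).re / (r (-Complex.I * (y:ℂ)⁻¹)).im)
      Filter.atTop (nhds L) := hLt
  have hax : Filter.Tendsto (fun y : ℝ => -Complex.I * (y:ℂ)⁻¹) Filter.atTop (ntl 1) :=
    tendsto_axis_ntl 1 one_pos
  have hw : Filter.Tendsto
      (fun y : ℝ => rB (-Complex.I * (y:ℂ)⁻¹) / r (-Complex.I * (y:ℂ)⁻¹))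
      Filter.atTop (nhds 1) := (hratio 1 one_pos).comp hax
  have hrna : ∀ᶠ y : ℝ in Filter.atTop, r (-Complex.I * (y:ℂ)⁻¹) ≠ 0 :=
    hax.eventually (hrne 1 one_pos)
  have hne_ratio : ∀ᶠ y : ℝ in Filter.atTop,
      (r (-Complex.I * (y:ℂ)⁻¹)).re / (r (-Complex.I * (y:ℂ)⁻¹)).im ≠ 0 :=
    hLt'.eventually_ne hL0
  have him : ∀ᶠ y : ℝ in Filter.atTop, (r (-Complex.I * (y:ℂ)⁻¹)).im ≠ 0 := by
    filter_upwards [hne_ratio] with y h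
    intro h0; exact h (by rw [h0, div_zero])
  have hre : ∀ᶠ y : ℝ in Filter.atTop, (r (-Complex.I * (y:ℂ)⁻¹)).re ≠ 0 := by
    filter_upwards [hne_ratio] with y h
    intro h0; exact h (by rw [h0, zero_div])
  have hu : Filter.Tendsto
      (fun y : ℝ => (rB (-Complex.I * (y:ℂ)⁻¹) / r (-Complex.I * (y:ℂ)⁻¹)).re)
      Filter.atTop (nhds 1) := by
    have := (Complex.continuous_re.tendsto (1:ℂ)).comp hw
    rw [Complex.one_re] at this; exact this
  have hv : Filter.Tendsto
      (fun y : ℝ => (rB (-Complex.I * (y:ℂ)⁻¹) / r (-Complex.I * (y:ℂ)⁻¹)).im)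
      Filter.atTop (nhds 0) := by
    have := (Complex.continuous_im.tendsto (1:ℂ)).comp hw
    rw [Complex.one_im] at this; exact this
  have hE1 : ∀ᶠ y : ℝ in Filter.atTop,
      (rB (-Complex.I * (y:ℂ)⁻¹)).im / (r (-Complex.I * (y:ℂ)⁻¹)).im
        = (rB (-Complex.I * (y:ℂ)⁻¹) / r (-Complex.I * (y:ℂ)⁻¹)).re
          + (rB (-Complex.I * (y:ℂ)⁻¹) / r (-Complex.I * (y:ℂ)⁻¹)).im
            * ((r (-Complex.I * (y:ℂ)⁻¹)).re / (r (-Complex.I * (y:ℂ)⁻¹)).im) := by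
    filter_upwards [hrna, him] with y h0 h1
    set s := r (-Complex.I * (y:ℂ)⁻¹) with hsdef
    set w := rB (-Complex.I * (y:ℂ)⁻¹) / s with hwdef
    have hm : rB (-Complex.I * (y:ℂ)⁻¹) = w * s := (div_mul_cancel₀ _ h0).symm
    rw [hm, Complex.mul_im]
    field_simp
  have hE2 : ∀ᶠ y : ℝ in Filter.atTop,
      (rB (-Complex.I * (y:ℂ)⁻¹)).re / (r (-Complex.I * (y:ℂ)⁻¹)).im
        = (rB (-Complex.I * (y:ℂ)⁻¹) / r (-Complex.I * (y:ℂ)⁻¹)).re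
            * ((r (-Complex.I * (y:ℂ)⁻¹)).re / (r (-Complex.I * (y:ℂ)⁻¹)).im)
          - (rB (-Complex.I * (y:ℂ)⁻¹) / r (-Complex.I * (y:ℂ)⁻¹)).im := by
    filter_upwards [hrna, him] with y h0 h1
    set s := r (-Complex.I * (y:ℂ)⁻¹) with hsdef
    set w := rB (-Complex.I * (y:ℂ)⁻¹) / s with hwdef
    have hm : rB (-Complex.I * (y:ℂ)⁻¹) = w * s := (div_mul_cancel₀ _ h0).symm
    rw [hm, Complex.mul_re]
    field_simp
  have limIm : Filter.Tendsto
      (fun y : ℝ => (rB (-Complex.I * (y:ℂ)⁻¹)).im / (r (-Complex.I * (y:ℂ)⁻¹)).im)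
      Filter.atTop (nhds 1) := by
    refine Filter.Tendsto.congr' (Filter.EventuallyEq.symm hE1) ?_
    have := hu.add (hv.mul hLt')
    simpa using this
  have limReIm : Filter.Tendsto
      (fun y : ℝ => (rB (-Complex.I * (y:ℂ)⁻¹)).re / (r (-Complex.I * (y:ℂ)⁻¹)).im)
      Filter.atTop (nhds L) := by
    refine Filter.Tendsto.congr' (Filter.EventuallyEq.symm hE2) ?_
    have := (hu.mul hLt').sub hv
    simpa using this
  refine ⟨b, ?_, ?_, ?_, ?_, ?_, ?_⟩
  · -- z / rB → 0
    rw [ntt_iff]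
    intro κ hκ
    have hev : (fun z : ℂ => z / rB z) =ᶠ[ntl κ] fun z => (z / r z) / (rB z / r z) := by
      filter_upwards [hrne κ hκ] with z hz
      rw [div_div_div_cancel' z (rB z) (r z) hz]
    refine Filter.Tendsto.congr' hev.symm ?_
    have := ((ntt_iff.1 hR2a) κ hκ).div (hratio κ hκ) one_ne_zero
    rw [zero_div] at this; exact this
  · -- rB → 0
    rw [ntt_iff]
    intro κ hκ
    have hev : rB =ᶠ[ntl κ] fun z => (rB z / r z) * r z := by
      filter_upwards [hrne κ hκ] with z hz
      rw [div_mul_cancel₀ _ hz]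
    refine Filter.Tendsto.congr' hev.symm ?_
    have := (hratio κ hκ).mul ((ntt_iff.1 hR2b) κ hκ)
    simpa using this
  · -- axis: ∃ L
    refine ⟨L, hL0, ?_⟩
    have hEq : ∀ᶠ y : ℝ in Filter.atTop,
        (rB (-Complex.I * (y:ℂ)⁻¹)).re / (rB (-Complex.I * (y:ℂ)⁻¹)).im
          = ((rB (-Complex.I * (y:ℂ)⁻¹)).re / (r (-Complex.I * (y:ℂ)⁻¹)).im)
            / ((rB (-Complex.I * (y:ℂ)⁻¹)).im / (r (-Complex.I * (y:ℂ)⁻¹)).im) := by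
      filter_upwards [him] with y h1
      exact (div_div_div_cancel' _ _ _ h1).symm
    have hfin := limReIm.div limIm one_ne_zero
    rw [div_one] at hfin
    exact Filter.Tendsto.congr' (Filter.EventuallyEq.symm hEq) hfin
  · exact ntt_iff.2 hratio
  · -- re ratio
    have hEq : ∀ᶠ y : ℝ in Filter.atTop,
        (rB (-Complex.I * (y:ℂ)⁻¹)).re / (r (-Complex.I * (y:ℂ)⁻¹)).re
          = ((rB (-Complex.I * (y:ℂ)⁻¹)).re / (r (-Complex.I * (y:ℂ)⁻¹)).im)
            / ((r (-Complex.I * (y:ℂ)⁻¹)).re / (r (-Complex.I * (y:ℂ)⁻¹)).im) := by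
      filter_upwards [him] with y h1
      exact (div_div_div_cancel' _ _ _ h1).symm
    have hfin := limReIm.div hLt' hL0
    rw [div_self hL0] at hfin
    exact Filter.Tendsto.congr' (Filter.EventuallyEq.symm hEq) hfin
  · -- im ratio
    exact limIm
end
end
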